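/- Let E be a real Hilbert space (e.g. ℝⁿ), J, G : E → ℝ convex functions, γ > 0, γ' > 0, ρ₀ ≥ 0 and z ∈ E with ‖z‖ ≤ ρ₀. Suppose: a is the proximal point of γJ at z; a' is the proximal point of γ'J at z; b is the proximal point of γG at 2a − z; b' is the proximal point of γ'G at 2a' − z; a₀ is the proximal point of γJ at 0; and b₀ is the proximal point of γG at 0. Then ‖(b' − a') − (b − a)‖ ≤ (|γ' − γ| / γ)·(2ρ₀ + ‖b₀‖ + 3‖a₀‖). (The left-hand side equals ‖F_{γ'}(z) − F_γ(z)‖, where F_γ = (rprox_{γG} ∘ rprox_{γJ} + Id)/2 is the Douglas–Rachford operator.) -/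

import Mathlib

open scoped RealInnerProductSpace

lemma prox_vi {E : Type*} [NormedAddCommGroup E] [InnerProductSpace ℝ E]
    (f : E → ℝ) (hf : ConvexOn ℝ Set.univ f) {γ : ℝ} (hγ : 0 < γ) (x p : E)
    (hp : ∀ y : E, γ * f p + 1 / 2 * ‖p - x‖ ^ 2 ≤ γ * f y + 1 / 2 * ‖y - x‖ ^ 2)
    (y : E) : ⟪x - p, y - p⟫ ≤ γ * (f y - f p) := by
  apply le_of_forall_pos_le_add
  intro ε hε
  set t : ℝ := min 1 (2 * ε / (‖y - p‖ ^ 2 + 1)) with ht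
  have hN : (0:ℝ) < ‖y - p‖ ^ 2 + 1 := by positivity
  have ht0 : 0 < t := lt_min one_pos (by positivity)
  have ht1 : t ≤ 1 := min_le_left _ _
  have htε : t * ‖y - p‖ ^ 2 / 2 ≤ ε := by
    have h1 : t ≤ 2 * ε / (‖y - p‖ ^ 2 + 1) := min_le_right _ _
    have h2 : t * (‖y - p‖ ^ 2 + 1) ≤ 2 * ε := by
      calc t * (‖y - p‖ ^ 2 + 1) ≤ 2 * ε / (‖y - p‖ ^ 2 + 1) * (‖y - p‖ ^ 2 + 1) :=
            mul_le_mul_of_nonneg_right h1 (le_of_lt hN)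
        _ = 2 * ε := by field_simp
    nlinarith [sq_nonneg ‖y - p‖, ht0]
  have hconv : f ((1 - t) • p + t • y) ≤ (1 - t) * f p + t * f y :=
    hf.2 (Set.mem_univ p) (Set.mem_univ y) (by linarith) (le_of_lt ht0) (by ring)
  have hmin := hp ((1 - t) • p + t • y)
  have hexp : ‖(1 - t) • p + t • y - x‖ ^ 2
      = ‖p - x‖ ^ 2 + 2 * t * ⟪p - x, y - p⟫ + t ^ 2 * ‖y - p‖ ^ 2 := by
    have hid : (1 - t) • p + t • y - x = (p - x) + t • (y - p) := by
      rw [sub_smul, one_smul, smul_sub]; abel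
    rw [hid, @norm_add_sq_real, real_inner_smul_right, norm_smul, Real.norm_eq_abs,
      abs_of_pos ht0, mul_pow]
    ring
  have hkey : 0 ≤ t * (γ * (f y - f p)) + t * ⟪p - x, y - p⟫ + t ^ 2 * ‖y - p‖ ^ 2 / 2 := by
    nlinarith [hmin, hconv, hγ, ht0]
  have hdiv : 0 ≤ γ * (f y - f p) + ⟪p - x, y - p⟫ + t * ‖y - p‖ ^ 2 / 2 := by
    have := mul_le_mul_of_nonneg_left hkey (le_of_lt (inv_pos.mpr ht0))
    have ht0' : t ≠ 0 := ne_of_gt ht0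
    field_simp at this ⊢
    nlinarith [hkey, ht0, sq_nonneg t]
  have hinner : ⟪x - p, y - p⟫ = -⟪p - x, y - p⟫ := by
    rw [← inner_neg_left]; congr 1; abel
  rw [hinner]
  linarith [hdiv, htε]

/-- Key inequality: `p` is prox of `γf` at `x`, `q` is prox of `γ'f` at `x'`. -/
lemma prox_key {E : Type*} [NormedAddCommGroup E] [InnerProductSpace ℝ E]
    (f : E → ℝ) (hf : ConvexOn ℝ Set.univ f) {γ γ' : ℝ} (hγ : 0 < γ) (hγ' : 0 < γ')
    (x x' p q : E)
    (hp : ∀ y : E, γ * f p + 1 / 2 * ‖p - x‖ ^ 2 ≤ γ * f y + 1 / 2 * ‖y - x‖ ^ 2)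
    (hq : ∀ y : E, γ' * f q + 1 / 2 * ‖q - x'‖ ^ 2 ≤ γ' * f y + 1 / 2 * ‖y - x'‖ ^ 2) :
    ‖q - p‖ ^ 2 ≤ (1 - γ' / γ) * ⟪x - p, q - p⟫ + ⟪x' - x, q - p⟫ := by
  have h1 : ⟪x - p, q - p⟫ ≤ γ * (f q - f p) := prox_vi f hf hγ x p hp q
  have h2 : ⟪x' - q, p - q⟫ ≤ γ' * (f p - f q) := prox_vi f hf hγ' x' q hq p
  have h1' : (γ' / γ) * ⟪x - p, q - p⟫ ≤ γ' * (f q - f p) := by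
    have := mul_le_mul_of_nonneg_left h1 (le_of_lt (div_pos hγ' hγ))
    calc (γ' / γ) * ⟪x - p, q - p⟫ ≤ (γ' / γ) * (γ * (f q - f p)) := this
      _ = γ' * (f q - f p) := by field_simp
  have hsum : (γ' / γ) * ⟪x - p, q - p⟫ + ⟪x' - q, p - q⟫ ≤ 0 := by linarith
  have hid : ⟪x' - q, p - q⟫
      = ‖q - p‖ ^ 2 - ⟪x - p, q - p⟫ - ⟪x' - x, q - p⟫ := by
    have hd : x' - q = (x' - x) + (x - p) - (q - p) := by abel
    have hd2 : p - q = -(q - p) := by abel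
    rw [hd, hd2, inner_neg_right, inner_sub_left, inner_add_left,
      real_inner_self_eq_norm_sq]
    ring
  rw [hid] at hsum
  linarith

/-- Nonexpansiveness of `Id − prox` (same step size). -/
lemma prox_id_sub {E : Type*} [NormedAddCommGroup E] [InnerProductSpace ℝ E]
    (f : E → ℝ) (hf : ConvexOn ℝ Set.univ f) {γ : ℝ} (hγ : 0 < γ) (x x' p q : E)
    (hp : ∀ y : E, γ * f p + 1 / 2 * ‖p - x‖ ^ 2 ≤ γ * f y + 1 / 2 * ‖y - x‖ ^ 2)
    (hq : ∀ y : E, γ * f q + 1 / 2 * ‖q - x'‖ ^ 2 ≤ γ * f y + 1 / 2 * ‖y - x'‖ ^ 2) :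
    ‖(x' - q) - (x - p)‖ ≤ ‖x' - x‖ := by
  have hk := prox_key f hf hγ hγ x x' p q hp hq
  rw [div_self (ne_of_gt hγ)] at hk
  simp only [sub_self, zero_mul, zero_add] at hk
  have hid : (x' - q) - (x - p) = (x' - x) - (q - p) := by abel
  have hexp : ‖(x' - x) - (q - p)‖ ^ 2
      = ‖x' - x‖ ^ 2 - 2 * ⟪x' - x, q - p⟫ + ‖q - p‖ ^ 2 := by
    rw [@norm_sub_sq_real]
  have hsq : ‖(x' - q) - (x - p)‖ ^ 2 ≤ ‖x' - x‖ ^ 2 := by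
    rw [hid, hexp]; nlinarith [sq_nonneg ‖q - p‖]
  nlinarith [norm_nonneg ((x' - q) - (x - p)), norm_nonneg (x' - x)]

/-- Reflected prox combined estimate. -/
lemma rprox_est {E : Type*} [NormedAddCommGroup E] [InnerProductSpace ℝ E]
    (f : E → ℝ) (hf : ConvexOn ℝ Set.univ f) {γ γ' : ℝ} (hγ : 0 < γ) (hγ' : 0 < γ')
    (x x' p q : E)
    (hp : ∀ y : E, γ * f p + 1 / 2 * ‖p - x‖ ^ 2 ≤ γ * f y + 1 / 2 * ‖y - x‖ ^ 2)
    (hq : ∀ y : E, γ' * f q + 1 / 2 * ‖q - x'‖ ^ 2 ≤ γ' * f y + 1 / 2 * ‖y - x'‖ ^ 2) :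
    ‖((2:ℝ) • q - x') - ((2:ℝ) • p - x)‖ ≤ 2 * (|γ' - γ| / γ) * ‖x - p‖ + ‖x' - x‖ := by
  have hk := prox_key f hf hγ hγ' x x' p q hp hq
  set d := q - p with hdd
  set m := x' - x with hmm
  set r := ((2:ℝ) • q - x') - ((2:ℝ) • p - x) with hrr
  have hrid : r = (2:ℝ) • d - m := by
    rw [hrr, hdd, hmm, smul_sub]; abel
  have hrsq : ‖r‖ ^ 2 = 4 * ‖d‖ ^ 2 - 4 * ⟪m, d⟫ + ‖m‖ ^ 2 := by
    rw [hrid, @norm_sub_sq_real, norm_smul, real_inner_smul_left, real_inner_comm]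
    simp [Real.norm_eq_abs]
    ring
  have habs : |1 - γ' / γ| = |γ' - γ| / γ := by
    have h1 : 1 - γ' / γ = (γ - γ') / γ := by field_simp
    rw [h1, abs_div, abs_of_pos hγ, abs_sub_comm]
  have hCS : (1 - γ' / γ) * ⟪x - p, d⟫ ≤ (|γ' - γ| / γ) * (‖x - p‖ * ‖d‖) := by
    calc (1 - γ' / γ) * ⟪x - p, d⟫ ≤ |(1 - γ' / γ) * ⟪x - p, d⟫| := le_abs_self _
      _ = |1 - γ' / γ| * |⟪x - p, d⟫| := abs_mul _ _
      _ ≤ |1 - γ' / γ| * (‖x - p‖ * ‖d‖) :=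
          mul_le_mul_of_nonneg_left (abs_real_inner_le_norm _ _) (abs_nonneg _)
      _ = (|γ' - γ| / γ) * (‖x - p‖ * ‖d‖) := by rw [habs]
  have hrsq2 : ‖r‖ ^ 2 ≤ 4 * (|γ' - γ| / γ) * (‖x - p‖ * ‖d‖) + ‖m‖ ^ 2 := by
    rw [hrsq]; nlinarith [hk, hCS]
  have h2d : 2 * ‖d‖ ≤ ‖r‖ + ‖m‖ := by
    have : (2:ℝ) • d = r + m := by rw [hrid]; abel
    calc 2 * ‖d‖ = ‖(2:ℝ) • d‖ := by rw [norm_smul]; simp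
      _ = ‖r + m‖ := by rw [this]
      _ ≤ ‖r‖ + ‖m‖ := norm_add_le _ _
  set δ := |γ' - γ| / γ with hδδ
  have hδ0 : 0 ≤ δ := div_nonneg (abs_nonneg _) (le_of_lt hγ)
  have hK0 : 0 ≤ ‖x - p‖ := norm_nonneg _
  have hr0 : 0 ≤ ‖r‖ := norm_nonneg _
  have hm0 : 0 ≤ ‖m‖ := norm_nonneg _
  have hd0 : 0 ≤ ‖d‖ := norm_nonneg _
  by_contra hcon
  push_neg at hcon
  have hc0 : 0 ≤ 2 * δ * ‖x - p‖ + ‖m‖ := by positivity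
  have hrpos : 0 < ‖r‖ + ‖m‖ := by linarith
  have hmul : 0 < (‖r‖ - (2 * δ * ‖x - p‖ + ‖m‖)) * (‖r‖ + ‖m‖) :=
    mul_pos (by linarith) hrpos
  have hdb := mul_le_mul_of_nonneg_left h2d (mul_nonneg hδ0 hK0)
  nlinarith [hmul, hdb, hrsq2]

/-- Prox step-size perturbation (same input point). -/
lemma prox_step {E : Type*} [NormedAddCommGroup E] [InnerProductSpace ℝ E]
    (f : E → ℝ) (hf : ConvexOn ℝ Set.univ f) {γ γ' : ℝ} (hγ : 0 < γ) (hγ' : 0 < γ')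
    (x p q : E)
    (hp : ∀ y : E, γ * f p + 1 / 2 * ‖p - x‖ ^ 2 ≤ γ * f y + 1 / 2 * ‖y - x‖ ^ 2)
    (hq : ∀ y : E, γ' * f q + 1 / 2 * ‖q - x‖ ^ 2 ≤ γ' * f y + 1 / 2 * ‖y - x‖ ^ 2) :
    ‖q - p‖ ≤ (|γ' - γ| / γ) * ‖x - p‖ := by
  have hk := prox_key f hf hγ hγ' x x p q hp hq
  simp only [sub_self, inner_zero_left, add_zero] at hk
  have habs : |1 - γ' / γ| = |γ' - γ| / γ := by
    have h1 : 1 - γ' / γ = (γ - γ') / γ := by field_simp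
    rw [h1, abs_div, abs_of_pos hγ, abs_sub_comm]
  have hCS : (1 - γ' / γ) * ⟪x - p, q - p⟫ ≤ (|γ' - γ| / γ) * (‖x - p‖ * ‖q - p‖) := by
    calc (1 - γ' / γ) * ⟪x - p, q - p⟫ ≤ |(1 - γ' / γ) * ⟪x - p, q - p⟫| := le_abs_self _
      _ = |1 - γ' / γ| * |⟪x - p, q - p⟫| := abs_mul _ _
      _ ≤ |1 - γ' / γ| * (‖x - p‖ * ‖q - p‖) :=
          mul_le_mul_of_nonneg_left (abs_real_inner_le_norm _ _) (abs_nonneg _)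
      _ = (|γ' - γ| / γ) * (‖x - p‖ * ‖q - p‖) := by rw [habs]
  rcases eq_or_lt_of_le (norm_nonneg (q - p)) with h0 | h0
  · rw [← h0]; positivity
  · have : ‖q - p‖ ^ 2 ≤ (|γ' - γ| / γ) * ‖x - p‖ * ‖q - p‖ := by nlinarith
    nlinarith

/-- Estimate (A.3): the deviation between the Douglas–Rachford operators with
step-sizes `γ'` and `γ`, evaluated at a point `z` with `‖z‖ ≤ ρ₀`, is bounded by
`(|γ' − γ| / γ)·(2ρ₀ + ‖prox_{γG}(0)‖ + 3‖prox_{γJ}(0)‖)`. -/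
theorem DR_operator_stepsize_perturbation {E : Type*} [NormedAddCommGroup E]
    [InnerProductSpace ℝ E] [CompleteSpace E]
    (J G : E → ℝ) (hJ : ConvexOn ℝ Set.univ J) (hG : ConvexOn ℝ Set.univ G)
    {γ γ' : ℝ} (hγ : 0 < γ) (hγ' : 0 < γ') {ρ₀ : ℝ} (hρ₀ : 0 ≤ ρ₀)
    (z : E) (hz : ‖z‖ ≤ ρ₀) (a a' b b' a₀ b₀ : E)
    (ha : ∀ y : E, γ * J a + 1 / 2 * ‖a - z‖ ^ 2 ≤ γ * J y + 1 / 2 * ‖y - z‖ ^ 2)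
    (ha' : ∀ y : E, γ' * J a' + 1 / 2 * ‖a' - z‖ ^ 2 ≤ γ' * J y + 1 / 2 * ‖y - z‖ ^ 2)
    (hb : ∀ y : E,
      γ * G b + 1 / 2 * ‖b - ((2 : ℝ) • a - z)‖ ^ 2 ≤
        γ * G y + 1 / 2 * ‖y - ((2 : ℝ) • a - z)‖ ^ 2)
    (hb' : ∀ y : E,
      γ' * G b' + 1 / 2 * ‖b' - ((2 : ℝ) • a' - z)‖ ^ 2 ≤
        γ' * G y + 1 / 2 * ‖y - ((2 : ℝ) • a' - z)‖ ^ 2)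
    (ha₀ : ∀ y : E, γ * J a₀ + 1 / 2 * ‖a₀ - 0‖ ^ 2 ≤ γ * J y + 1 / 2 * ‖y - 0‖ ^ 2)
    (hb₀ : ∀ y : E, γ * G b₀ + 1 / 2 * ‖b₀ - 0‖ ^ 2 ≤ γ * G y + 1 / 2 * ‖y - 0‖ ^ 2) :
    ‖(b' - a') - (b - a)‖ ≤ (|γ' - γ| / γ) * (2 * ρ₀ + ‖b₀‖ + 3 * ‖a₀‖) := by
  set δ : ℝ := |γ' - γ| / γ with hδδ
  have hδ0 : 0 ≤ δ := div_nonneg (abs_nonneg _) (le_of_lt hγ)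
  -- step-size perturbation of prox of J at z
  have h1 : ‖a' - a‖ ≤ δ * ‖z - a‖ := prox_step J hJ hγ hγ' z a a' ha ha'
  -- ‖z - a‖ ≤ ρ₀ + ‖a₀‖
  have h2 : ‖(z - a) - (0 - a₀)‖ ≤ ‖z - 0‖ := prox_id_sub J hJ hγ 0 z a₀ a ha₀ ha
  have hza : ‖z - a‖ ≤ ρ₀ + ‖a₀‖ := by
    have : ‖z - a‖ ≤ ‖(z - a) - (0 - a₀)‖ + ‖0 - a₀‖ := by
      calc ‖z - a‖ = ‖((z - a) - (0 - a₀)) + (0 - a₀)‖ := by abel_nf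
        _ ≤ ‖(z - a) - (0 - a₀)‖ + ‖0 - a₀‖ := norm_add_le _ _
    simp only [sub_zero, zero_sub, norm_neg] at this h2
    linarith
  -- ‖2a - z‖ ≤ ρ₀ + 2‖a₀‖
  have h3 : ‖((2:ℝ) • a - z) - ((2:ℝ) • a₀ - 0)‖ ≤ 2 * (|γ - γ| / γ) * ‖0 - a₀‖ + ‖z - 0‖ :=
    rprox_est J hJ hγ hγ 0 z a₀ a ha₀ ha
  have hx : ‖(2:ℝ) • a - z‖ ≤ ρ₀ + 2 * ‖a₀‖ := by
    simp only [sub_self, abs_zero, zero_div, mul_zero, zero_mul, zero_add, sub_zero,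
      zero_sub, norm_neg] at h3
    have : ‖(2:ℝ) • a - z‖ ≤ ‖((2:ℝ) • a - z) - (2:ℝ) • a₀‖ + ‖(2:ℝ) • a₀‖ := by
      calc ‖(2:ℝ) • a - z‖ = ‖(((2:ℝ) • a - z) - (2:ℝ) • a₀) + (2:ℝ) • a₀‖ := by abel_nf
        _ ≤ _ := norm_add_le _ _
    have hn2 : ‖(2:ℝ) • a₀‖ = 2 * ‖a₀‖ := by
      rw [norm_smul, Real.norm_eq_abs]; norm_num
    linarith
  -- ‖(2a - z) - b‖ ≤ ρ₀ + 2‖a₀‖ + ‖b₀‖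
  have h4 : ‖(((2:ℝ) • a - z) - b) - (0 - b₀)‖ ≤ ‖((2:ℝ) • a - z) - 0‖ :=
    prox_id_sub G hG hγ 0 ((2:ℝ) • a - z) b₀ b hb₀ hb
  have hxb : ‖((2:ℝ) • a - z) - b‖ ≤ ρ₀ + 2 * ‖a₀‖ + ‖b₀‖ := by
    simp only [sub_zero, zero_sub, sub_neg_eq_add] at h4
    have : ‖((2:ℝ) • a - z) - b‖ ≤ ‖(((2:ℝ) • a - z) - b) + b₀‖ + ‖b₀‖ := by
      calc ‖((2:ℝ) • a - z) - b‖ = ‖((((2:ℝ) • a - z) - b) + b₀) + (-b₀)‖ := by abel_nf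
        _ ≤ ‖(((2:ℝ) • a - z) - b) + b₀‖ + ‖-b₀‖ := norm_add_le _ _
        _ = ‖(((2:ℝ) • a - z) - b) + b₀‖ + ‖b₀‖ := by rw [norm_neg]
    linarith
  -- main reflected-prox estimate for G
  have h5 : ‖((2:ℝ) • b' - ((2:ℝ) • a' - z)) - ((2:ℝ) • b - ((2:ℝ) • a - z))‖ ≤
      2 * δ * ‖((2:ℝ) • a - z) - b‖ + ‖((2:ℝ) • a' - z) - ((2:ℝ) • a - z)‖ :=
    rprox_est G hG hγ hγ' ((2:ℝ) • a - z) ((2:ℝ) • a' - z) b b' hb hb'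
  have hL : ((2:ℝ) • b' - ((2:ℝ) • a' - z)) - ((2:ℝ) • b - ((2:ℝ) • a - z))
      = (2:ℝ) • ((b' - a') - (b - a)) := by
    simp only [smul_sub]; abel
  have hR : ((2:ℝ) • a' - z) - ((2:ℝ) • a - z) = (2:ℝ) • (a' - a) := by
    simp only [smul_sub]; abel
  have hnorm2 : ∀ u : E, ‖(2:ℝ) • u‖ = 2 * ‖u‖ := by
    intro u; rw [norm_smul, Real.norm_eq_abs]; norm_num
  rw [hL, hR, hnorm2, hnorm2] at h5
  have hfin : ‖(b' - a') - (b - a)‖ ≤ δ * ‖((2:ℝ) • a - z) - b‖ + ‖a' - a‖ := by linarith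
  have hb1 : δ * ‖((2:ℝ) • a - z) - b‖ ≤ δ * (ρ₀ + 2 * ‖a₀‖ + ‖b₀‖) :=
    mul_le_mul_of_nonneg_left hxb hδ0
  have hb2 : δ * ‖z - a‖ ≤ δ * (ρ₀ + ‖a₀‖) := mul_le_mul_of_nonneg_left hza hδ0
  calc ‖(b' - a') - (b - a)‖ ≤ δ * ‖((2:ℝ) • a - z) - b‖ + ‖a' - a‖ := hfin
    _ ≤ δ * (ρ₀ + 2 * ‖a₀‖ + ‖b₀‖) + δ * (ρ₀ + ‖a₀‖) := by linarith
    _ = δ * (2 * ρ₀ + ‖b₀‖ + 3 * ‖a₀‖) := by ring
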